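/- For each fixed y ∈ (−π/2, π/2), lim_{δ→0⁺} (1/δ)·log[ R(iy, S_δ) / R(iy, S) ] = 1/π + ((π + 2y)·tan y)/(2π), and this limit is a finite positive number; moreover the convergence is uniform on compact subsets of (−π/2, π/2). -/

import Mathlib

open Real Filter

/-- Conformal radius of the strip `S_δ = {z : -π/2 < Im z < π/2 + δ}` at the point `iy`. -/
noncomputable def stripRad (δ y : ℝ) : ℝ :=
  4 * ((π + δ) / π) * Real.cos ((π / 2) * (2 * y - δ) / (π + δ))

/-- The limit function. -/
noncomputable def stripLim (y : ℝ) : ℝ :=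
  1 / π + (π + 2 * y) * Real.tan y / (2 * π)

lemma stripRad_zero (y : ℝ) : stripRad 0 y = 4 * Real.cos y := by
  have hπ : (π : ℝ) ≠ 0 := Real.pi_ne_zero
  unfold stripRad
  have h1 : (π / 2) * (2 * y - 0) / (π + 0) = y := by field_simp; ring
  rw [h1]
  field_simp
  ring

lemma cos_lower {b' : ℝ} (hb' : b' < π/2) {s : ℝ} (hs : s ∈ Set.Icc (-b') b') :
    Real.cos b' ≤ Real.cos s := by
  rw [← Real.cos_abs s]
  have hb'0 : 0 ≤ b' := le_trans (abs_nonneg s) (abs_le.2 ⟨hs.1, hs.2⟩)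
  apply Real.strictAntiOn_cos.antitoneOn ⟨abs_nonneg s, ?_⟩
    ⟨by linarith, by linarith [Real.pi_gt_three]⟩ (abs_le.2 ⟨hs.1, hs.2⟩)
  calc |s| ≤ b' := abs_le.2 ⟨hs.1, hs.2⟩
    _ ≤ π := by linarith [Real.pi_gt_three]

lemma tan_lip {b' : ℝ} (hb' : b' < π/2) {p q : ℝ}
    (hp : p ∈ Set.Icc (-b') b') (hq : q ∈ Set.Icc (-b') b') :
    |Real.tan p - Real.tan q| ≤ ((Real.cos b')^2)⁻¹ * |p - q| := by
  have hb'0 : 0 ≤ b' := le_trans (abs_nonneg p) (abs_le.2 ⟨hp.1, hp.2⟩)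
  have hcb' : 0 < Real.cos b' := Real.cos_pos_of_mem_Ioo ⟨by linarith, hb'⟩
  have hne : ∀ s ∈ Set.Icc (-b') b', Real.cos s ≠ 0 := fun s hs =>
    (lt_of_lt_of_le hcb' (cos_lower hb' hs)).ne'
  have key := Convex.norm_image_sub_le_of_norm_hasDerivWithin_le
    (f := Real.tan) (f' := fun s => 1 / Real.cos s ^ 2) (C := ((Real.cos b')^2)⁻¹)
    (s := Set.Icc (-b') b')
    (fun s hs => (Real.hasDerivAt_tan (hne s hs)).hasDerivWithinAt)
    ?_ (convex_Icc _ _) hq hp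
  · simpa [Real.norm_eq_abs] using key
  · intro s hs
    have h1 : Real.cos b' ≤ Real.cos s := cos_lower hb' hs
    have h2 : 0 < Real.cos s := lt_of_lt_of_le hcb' h1
    show ‖(1:ℝ) / Real.cos s ^ 2‖ ≤ (Real.cos b' ^ 2)⁻¹
    rw [Real.norm_eq_abs, abs_of_nonneg (by positivity), one_div]
    apply inv_anti₀ (by positivity)
    nlinarith

lemma est {b b' : ℝ} (hb : 0 ≤ b) (hbb' : b < b') (hb' : b' < π/2)
    {δ : ℝ} (hδ : 0 < δ) (hδ2 : δ < b' - b) {y : ℝ} (hy : y ∈ Set.Icc (-b) b) :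
    |(1/δ) * Real.log (stripRad δ y / stripRad 0 y) - stripLim y| ≤
      |(1/δ) * Real.log ((π+δ)/π) - 1/π|
        + (((Real.cos b')^2)⁻¹ + Real.tan b' / π) * δ := by
  have hπ : (0:ℝ) < π := Real.pi_pos
  set G := (π/2) * (2*y - δ) / (π + δ) with hGdef
  have hy1 : -b ≤ y := hy.1
  have hy2 : y ≤ b := hy.2
  have hyI : -(π/2) < y := by linarith
  have hyI2 : y < π/2 := by linarith
  have hπδ : (0:ℝ) < π + δ := by linarith
  have hpy : (0:ℝ) ≤ π/2 + y := by linarith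
  have hx : G - y = -(δ * (π/2 + y) / (π + δ)) := by
    rw [hGdef]; field_simp; ring
  have habs : |G - y| ≤ δ := by
    rw [hx, abs_neg, abs_of_nonneg (div_nonneg (mul_nonneg hδ.le hpy) hπδ.le)]
    rw [div_le_iff₀ hπδ]
    nlinarith
  have hGmem : G ∈ Set.Icc (-b') b' := by
    have h1 : |G| ≤ |y| + |G - y| := by
      have := abs_add_le y (G - y); simpa using this
    have h2 : |y| ≤ b := abs_le.2 ⟨hy1, hy2⟩
    have h3 : |G| ≤ b' := by linarith
    exact ⟨by linarith [neg_abs_le G], by linarith [le_abs_self G]⟩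
  have hymem : y ∈ Set.Icc (-b') b' := ⟨by linarith, by linarith⟩
  have hcb' : 0 < Real.cos b' := Real.cos_pos_of_mem_Ioo ⟨by linarith, hb'⟩
  have hcosG : 0 < Real.cos G := lt_of_lt_of_le hcb' (cos_lower hb' hGmem)
  have hcosy : 0 < Real.cos y := lt_of_lt_of_le hcb' (cos_lower hb' hymem)
  set L := ((Real.cos b')^2)⁻¹ with hLdef
  have hL0 : 0 ≤ L := by positivity
  -- log of the ratio
  have hlog : Real.log (stripRad δ y / stripRad 0 y)
      = Real.log ((π+δ)/π) + (Real.log (Real.cos G) - Real.log (Real.cos y)) := by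
    rw [stripRad_zero]
    have hrw : stripRad δ y / (4 * Real.cos y) = ((π+δ)/π) * (Real.cos G / Real.cos y) := by
      unfold stripRad
      rw [← hGdef]
      field_simp
    rw [hrw, Real.log_mul (by positivity) (div_pos hcosG hcosy).ne',
      Real.log_div hcosG.ne' hcosy.ne']
  -- MVT estimate
  set I := Set.Icc (min y G) (max y G) with hIdef
  have hIsub : I ⊆ Set.Icc (-b') b' := by
    intro s hs
    constructor
    · exact le_trans (le_min hymem.1 hGmem.1) hs.1
    · exact le_trans hs.2 (max_le hymem.2 hGmem.2)
  have hder : ∀ s ∈ I, HasDerivWithinAt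
      (fun s => Real.log (Real.cos s) + Real.tan y * s)
      (Real.tan y - Real.tan s) I s := by
    intro s hs
    have hne : Real.cos s ≠ 0 := (lt_of_lt_of_le hcb' (cos_lower hb' (hIsub hs))).ne'
    have h1 : HasDerivAt (fun s => Real.log (Real.cos s) + Real.tan y * s)
        (-Real.sin s / Real.cos s + Real.tan y * 1) s :=
      ((Real.hasDerivAt_cos s).log hne).add ((hasDerivAt_id s).const_mul (Real.tan y))
    have h2 : Real.tan y - Real.tan s = -Real.sin s / Real.cos s + Real.tan y * 1 := by
      simp only [Real.tan_eq_sin_div_cos]; ring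
    rw [h2]
    exact h1.hasDerivWithinAt
  have hbound : ∀ s ∈ I, ‖Real.tan y - Real.tan s‖ ≤ L * δ := by
    intro s hs
    have hsmem := hIsub hs
    have hdist : |y - s| ≤ |G - y| := by
      have hmin : y - |G - y| ≤ min y G :=
        le_min (by linarith [abs_nonneg (G - y)]) (by linarith [neg_abs_le (G - y)])
      have hmax : max y G ≤ y + |G - y| :=
        max_le (by linarith [abs_nonneg (G - y)]) (by linarith [le_abs_self (G - y)])
      have h1 := hs.1
      have h2 := hs.2
      rw [abs_le]
      constructor <;> [linarith; linarith]
    calc ‖Real.tan y - Real.tan s‖ = |Real.tan y - Real.tan s| := Real.norm_eq_abs _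
      _ ≤ L * |y - s| := tan_lip hb' hymem hsmem
      _ ≤ L * δ := by
          apply mul_le_mul_of_nonneg_left _ hL0
          linarith
  have hkey := Convex.norm_image_sub_le_of_norm_hasDerivWithin_le hder hbound
    (convex_Icc _ _) (Set.mem_Icc.2 ⟨min_le_left _ _, le_max_left _ _⟩)
    (Set.mem_Icc.2 ⟨min_le_right _ _, le_max_right _ _⟩)
  have hD : |(Real.log (Real.cos G) + Real.tan y * G)
      - (Real.log (Real.cos y) + Real.tan y * y)| ≤ L * δ * δ := by
    rw [Real.norm_eq_abs, Real.norm_eq_abs] at hkey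
    calc |(Real.log (Real.cos G) + Real.tan y * G)
        - (Real.log (Real.cos y) + Real.tan y * y)| ≤ L * δ * |G - y| := hkey
      _ ≤ L * δ * δ := by
          apply mul_le_mul_of_nonneg_left habs (by positivity)
  -- |tan y| ≤ tan b'
  have hT : |Real.tan y| ≤ Real.tan b' := by
    have hmono := Real.strictMonoOn_tan
    have hyIoo : y ∈ Set.Ioo (-(π/2)) (π/2) := ⟨hyI, hyI2⟩
    have hb'Ioo : b' ∈ Set.Ioo (-(π/2)) (π/2) := ⟨by linarith, hb'⟩
    have hnb'Ioo : -b' ∈ Set.Ioo (-(π/2)) (π/2) := ⟨by linarith, by linarith⟩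
    have h1 : Real.tan y ≤ Real.tan b' := (hmono hyIoo hb'Ioo (by linarith)).le
    have h2 : Real.tan (-b') ≤ Real.tan y := (hmono hnb'Ioo hyIoo (by linarith)).le
    rw [Real.tan_neg] at h2
    exact abs_le.2 ⟨by linarith, h1⟩
  have hT0 : 0 ≤ Real.tan b' :=
    Real.tan_nonneg_of_nonneg_of_le_pi_div_two (by linarith) hb'.le
  -- small bracket
  have h4 : |(G - y)/δ + (π + 2*y)/(2*π)| ≤ δ/π := by
    have heq : (G - y)/δ + (π + 2*y)/(2*π) = (π + 2*y) * δ / (2*π*(π+δ)) := by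
      rw [hx]; field_simp; ring
    rw [heq, abs_of_nonneg (div_nonneg (mul_nonneg (by linarith) hδ.le) (by positivity))]
    rw [div_le_div_iff₀ (by positivity) hπ]
    nlinarith [mul_le_mul_of_nonneg_right (show π + 2*y ≤ 2*(π+δ) by linarith)
      (mul_nonneg hδ.le hπ.le)]
  -- the identity
  have hid : (1/δ) * Real.log (stripRad δ y / stripRad 0 y) - stripLim y
      = ((1/δ) * Real.log ((π+δ)/π) - 1/π)
        + (1/δ) * ((Real.log (Real.cos G) + Real.tan y * G)
            - (Real.log (Real.cos y) + Real.tan y * y))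
        + (-Real.tan y) * ((G - y)/δ + (π + 2*y)/(2*π)) := by
    rw [hlog]
    unfold stripLim
    ring
  rw [hid]
  have e2 : |(1/δ) * ((Real.log (Real.cos G) + Real.tan y * G)
      - (Real.log (Real.cos y) + Real.tan y * y))| ≤ L * δ := by
    rw [abs_mul, abs_of_pos (by positivity : (0:ℝ) < 1/δ)]
    calc (1/δ) * |(Real.log (Real.cos G) + Real.tan y * G)
        - (Real.log (Real.cos y) + Real.tan y * y)| ≤ (1/δ) * (L * δ * δ) := by
          apply mul_le_mul_of_nonneg_left hD (by positivity)
      _ = L * δ := by field_simp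
  have e3 : |(-Real.tan y) * ((G - y)/δ + (π + 2*y)/(2*π))| ≤ Real.tan b' / π * δ := by
    rw [abs_mul, abs_neg]
    calc |Real.tan y| * |(G - y)/δ + (π + 2*y)/(2*π)| ≤ Real.tan b' * (δ/π) := by
          apply mul_le_mul hT h4 (abs_nonneg _) hT0
      _ = Real.tan b' / π * δ := by ring
  calc |((1/δ) * Real.log ((π+δ)/π) - 1/π)
        + (1/δ) * ((Real.log (Real.cos G) + Real.tan y * G)
            - (Real.log (Real.cos y) + Real.tan y * y))
        + (-Real.tan y) * ((G - y)/δ + (π + 2*y)/(2*π))|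
      ≤ |((1/δ) * Real.log ((π+δ)/π) - 1/π)
        + (1/δ) * ((Real.log (Real.cos G) + Real.tan y * G)
            - (Real.log (Real.cos y) + Real.tan y * y))|
        + |(-Real.tan y) * ((G - y)/δ + (π + 2*y)/(2*π))| := abs_add_le _ _
    _ ≤ (|(1/δ) * Real.log ((π+δ)/π) - 1/π|
        + |(1/δ) * ((Real.log (Real.cos G) + Real.tan y * G)
            - (Real.log (Real.cos y) + Real.tan y * y))|)
        + |(-Real.tan y) * ((G - y)/δ + (π + 2*y)/(2*π))| :=
          add_le_add (abs_add_le _ _) le_rfl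
    _ ≤ (|(1/δ) * Real.log ((π+δ)/π) - 1/π| + L * δ) + Real.tan b' / π * δ :=
          add_le_add (add_le_add le_rfl e2) e3
    _ = |(1/δ) * Real.log ((π+δ)/π) - 1/π| + (L + Real.tan b' / π) * δ := by ring

lemma tendA : Tendsto (fun δ : ℝ => (1/δ) * Real.log ((π+δ)/π)) (nhdsWithin 0 (Set.Ioi 0))
    (nhds (1/π)) := by
  have hπ : (0:ℝ) < π := Real.pi_pos
  have h : HasDerivAt (fun x : ℝ => Real.log ((π+x)/π)) (1/π) 0 := by
    have h1 : HasDerivAt (fun x : ℝ => (π+x)/π) (1/π) 0 := by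
      have := ((hasDerivAt_id (0:ℝ)).const_add π).div_const π
      simpa using this
    have h2 := h1.log (by simp [Real.pi_ne_zero] : ((π+(0:ℝ))/π) ≠ 0)
    convert h2 using 1
    rw [add_zero, div_self Real.pi_ne_zero, div_one]
  have h3 := hasDerivAt_iff_tendsto_slope.1 h
  have h4 : Tendsto (slope (fun x : ℝ => Real.log ((π+x)/π)) 0)
      (nhdsWithin 0 (Set.Ioi 0)) (nhds (1/π)) :=
    h3.mono_left (nhdsWithin_mono 0 (fun x hx => ne_of_gt hx))
  apply h4.congr'
  filter_upwards [self_mem_nhdsWithin] with δ hδ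
  have hδ' : (δ:ℝ) ≠ 0 := ne_of_gt hδ
  rw [slope_def_field]
  have h0 : Real.log ((π+(0:ℝ))/π) = 0 := by
    rw [add_zero, div_self Real.pi_ne_zero, Real.log_one]
  rw [h0, sub_zero, sub_zero]
  ring

lemma unif {b : ℝ} (hb : 0 ≤ b) (hb2 : b < π/2) :
    TendstoUniformlyOn (fun δ y => (1 / δ) * Real.log (stripRad δ y / stripRad 0 y))
      stripLim (nhdsWithin 0 (Set.Ioi 0)) (Set.Icc (-b) b) := by
  have hπ : (0:ℝ) < π := Real.pi_pos
  set b' := (b + π/2)/2 with hb'def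
  have hbb' : b < b' := by rw [hb'def]; linarith
  have hb' : b' < π/2 := by rw [hb'def]; linarith
  set L := ((Real.cos b')^2)⁻¹ with hLdef
  set T := Real.tan b' with hTdef
  have hE : Tendsto (fun δ : ℝ => |(1/δ) * Real.log ((π+δ)/π) - 1/π| + (L + T/π)*δ)
      (nhdsWithin 0 (Set.Ioi 0)) (nhds 0) := by
    have h1 : Tendsto (fun δ : ℝ => |(1/δ) * Real.log ((π+δ)/π) - 1/π|)
        (nhdsWithin 0 (Set.Ioi 0)) (nhds 0) := by
      have h1' : Tendsto (fun δ : ℝ => (1/δ) * Real.log ((π+δ)/π) - 1/π)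
          (nhdsWithin 0 (Set.Ioi 0)) (nhds (1/π - 1/π)) := tendA.sub tendsto_const_nhds
      rw [sub_self] at h1'
      have h1'' := h1'.abs
      rwa [abs_zero] at h1''
    have h2 : Tendsto (fun δ : ℝ => (L + T/π)*δ) (nhdsWithin 0 (Set.Ioi 0)) (nhds 0) := by
      have h3 : Tendsto (fun δ : ℝ => (L + T/π)*δ) (nhds 0) (nhds ((L + T/π)*0)) :=
        (tendsto_id.const_mul _)
      rw [mul_zero] at h3
      exact h3.mono_left nhdsWithin_le_nhds
    simpa using h1.add h2
  rw [Metric.tendstoUniformlyOn_iff]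
  intro ε hε
  have hev1 := hE.eventually (gt_mem_nhds hε)
  have hev2 : ∀ᶠ δ : ℝ in nhdsWithin 0 (Set.Ioi 0), δ ∈ Set.Ioo 0 (b' - b) :=
    eventually_of_mem (Ioo_mem_nhdsGT_of_mem ⟨le_refl 0, by linarith⟩) (fun x hx => hx)
  filter_upwards [hev1, hev2] with δ h1 h2
  intro y hy
  rw [Real.dist_eq, abs_sub_comm]
  calc |(1/δ) * Real.log (stripRad δ y / stripRad 0 y) - stripLim y|
      ≤ |(1/δ) * Real.log ((π+δ)/π) - 1/π| + (L + T/π)*δ := est hb hbb' hb' h2.1 h2.2 hy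
    _ < ε := h1

lemma lim_pos {y : ℝ} (hy : y ∈ Set.Ioo (-(π/2)) (π/2)) : 0 < stripLim y := by
  have hπ : (0:ℝ) < π := Real.pi_pos
  unfold stripLim
  rcases le_or_gt 0 y with h | h
  · have ht : 0 ≤ Real.tan y :=
      Real.tan_nonneg_of_nonneg_of_le_pi_div_two h hy.2.le
    have h1 : 0 < 1/π := by positivity
    have h2 : 0 ≤ (π + 2*y) * Real.tan y / (2*π) :=
      div_nonneg (mul_nonneg (by linarith) ht) (by linarith)
    linarith
  · obtain ⟨u, hu⟩ : ∃ u : ℝ, u = y + π/2 := ⟨_, rfl⟩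
    have hu1 : 0 < u := by rw [hu]; linarith [hy.1]
    have hu2 : u < π/2 := by rw [hu]; linarith
    have htan := Real.lt_tan hu1 hu2
    have hcos : 0 < Real.cos u := Real.cos_pos_of_mem_Ioo ⟨by linarith, hu2⟩
    have hsin : 0 < Real.sin u := Real.sin_pos_of_pos_of_lt_pi hu1 (by linarith)
    have hkey : u * Real.cos u < Real.sin u := by
      rw [Real.tan_eq_sin_div_cos] at htan
      calc u * Real.cos u < (Real.sin u / Real.cos u) * Real.cos u :=
            mul_lt_mul_of_pos_right htan hcos
        _ = Real.sin u := by field_simp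
    have hsy : Real.sin y = -Real.cos u := by
      rw [hu, Real.cos_add_pi_div_two]; ring
    have hcy : Real.cos y = Real.sin u := by
      rw [hu, Real.sin_add_pi_div_two]
    have hty : Real.tan y = -Real.cos u / Real.sin u := by
      rw [Real.tan_eq_sin_div_cos, hsy, hcy]
    have hπ2y : π + 2*y = 2*u := by rw [hu]; ring
    rw [hty, hπ2y]
    have hgt : -2 < 2*u*(-Real.cos u/Real.sin u) := by
      have h5 : 2*u*(-Real.cos u/Real.sin u) = -(2*u*Real.cos u/Real.sin u) := by ring
      rw [h5, neg_lt_neg_iff]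
      rw [div_lt_iff₀ hsin]
      nlinarith
    have h6 : (-2)/(2*π) < 2*u*(-Real.cos u/Real.sin u)/(2*π) :=
      div_lt_div_of_pos_right hgt (by linarith)
    have h7 : (-2)/(2*π) = -(1/π) := by field_simp
    rw [h7] at h6
    linarith

theorem stmt14 :
    (∀ y ∈ Set.Ioo (-(π/2)) (π/2),
      Tendsto (fun δ => (1 / δ) * Real.log (stripRad δ y / stripRad 0 y))
        (nhdsWithin 0 (Set.Ioi 0)) (nhds (stripLim y)) ∧ 0 < stripLim y) ∧
    (∀ K : Set ℝ, IsCompact K → K ⊆ Set.Ioo (-(π/2)) (π/2) →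
      TendstoUniformlyOn (fun δ y => (1 / δ) * Real.log (stripRad δ y / stripRad 0 y))
        stripLim (nhdsWithin 0 (Set.Ioi 0)) K) := by
  constructor
  · intro y hy
    refine ⟨?_, lim_pos hy⟩
    have h := unif (abs_nonneg y) (abs_lt.2 ⟨hy.1, hy.2⟩)
    exact h.tendsto_at ⟨neg_abs_le y, le_abs_self y⟩
  · intro K hK hKsub
    rcases K.eq_empty_or_nonempty with rfl | hne
    · exact tendstoUniformlyOn_empty
    · obtain ⟨y₀, hy₀K, hmax⟩ := hK.exists_isMaxOn hne (continuous_abs.continuousOn)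
      have hb2 : |y₀| < π/2 := abs_lt.2 ⟨(hKsub hy₀K).1, (hKsub hy₀K).2⟩
      refine (unif (abs_nonneg y₀) hb2).mono ?_
      intro y hy
      have h8 : |y| ≤ |y₀| := hmax hy
      exact ⟨(abs_le.1 h8).1, (abs_le.1 h8).2⟩
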